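/- Let Y be a real normed space and let G : ℂ → Y be a continuous mapping which is positively homogeneous (G(r·z) = r·G(z) for all real r ≥ 0 and all z ∈ ℂ), satisfies G(−z) = −G(z) for all z ∈ ℂ, and satisfies G(a + b) = G(a) + G(b) whenever a, b ∈ ℂ have |a| = |b|. Then G is real-linear; explicitly, G(z) = Re(z)·G(1) + Im(z)·G(i) for every z ∈ ℂ. -/

import Mathlib

/-- A continuous, positively homogeneous, odd map `G : ℂ → Y` into a real normed
space which is additive on pairs of complex numbers of equal modulus is real-linear:
`G z = Re z • G 1 + Im z • G i` for every `z`. -/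
theorem stmt3 {Y : Type*} [NormedAddCommGroup Y] [NormedSpace ℝ Y]
    (G : ℂ → Y) (hcont : Continuous G)
    (hhom : ∀ (r : ℝ), 0 ≤ r → ∀ z : ℂ, G (r • z) = r • G z)
    (hodd : ∀ z : ℂ, G (-z) = -G z)
    (hadd : ∀ a b : ℂ, ‖a‖ = ‖b‖ → G (a + b) = G a + G b) :
    ∀ z : ℂ, G z = z.re • G 1 + z.im • G Complex.I := by
  have hr : ∀ (r : ℝ) (w : ℂ), G (r • w) = r • G w := by
    intro r w
    rcases le_or_gt 0 r with h | h
    · exact hhom r h w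
    · have e : r • w = -((-r) • w) := by rw [neg_smul, neg_neg]
      rw [e, hodd, hhom (-r) (by linarith), neg_smul, neg_neg]
  intro z
  have h1 : G (z + (starRingEnd ℂ) z) = G z + G ((starRingEnd ℂ) z) :=
    hadd _ _ (by simp)
  have h2 : G (z + -(starRingEnd ℂ) z) = G z + G (-(starRingEnd ℂ) z) :=
    hadd _ _ (by simp)
  have e1 : z + (starRingEnd ℂ) z = (2 * z.re : ℝ) • (1 : ℂ) := by
    apply Complex.ext <;> simp [Complex.add_re, Complex.conj_re, Complex.conj_im] <;> ring
  have e2 : z + -(starRingEnd ℂ) z = (2 * z.im : ℝ) • Complex.I := by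
    apply Complex.ext <;> simp [Complex.conj_re, Complex.conj_im] <;> ring
  rw [e1, hr] at h1
  rw [e2, hr, hodd] at h2
  have key : (2 : ℝ) • G z = (2 * z.re : ℝ) • G 1 + (2 * z.im : ℝ) • G Complex.I := by
    rw [h1, h2, two_smul]
    abel
  have := congrArg (fun y => (2⁻¹ : ℝ) • y) key
  simpa [smul_smul, smul_add, ← mul_assoc] using this
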